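/- Let S be a set of 10 piece selections in Fin 3 → Fin 4 with positive weights such that every one of the 12 axis planes has total weight exactly 1/4. Then the graph on S with edges between pairwise disjoint selections has a connected component containing at least 6 vertices. -/

import Mathlib

/-- The conflict graph on a set `S` of piece selections: two selections are adjacent
iff both lie in `S` and they are disjoint (differ in every coordinate). -/
def conflictGraph (S : Finset (Fin 3 → Fin 4)) : SimpleGraph (Fin 3 → Fin 4) where
  Adj s t := s ∈ S ∧ t ∈ S ∧ ∀ i, s i ≠ t i
  symm := by
    constructor
    intro s t ⟨hs, ht, h⟩
    exact ⟨ht, hs, fun i => (h i).symm⟩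
  loopless := by
    constructor
    intro s ⟨_, _, h⟩
    exact h 0 rfl

/-- If each of the 12 axis planes has total weight exactly `1/4`, then the conflict
graph on the 10 selections has a connected component with at least 6 vertices. -/
theorem conflict_graph_big_component (S : Finset (Fin 3 → Fin 4)) (hS : S.card = 10)
    (a : (Fin 3 → Fin 4) → ℝ) (hpos : ∀ s ∈ S, 0 < a s)
    (hplane : ∀ (i : Fin 3) (j : Fin 4),
      ∑ s ∈ S.filter (fun s => s i = j), a s = 1 / 4) :
    ∃ v ∈ S, 6 ≤ Set.ncard {t | t ∈ S ∧ (conflictGraph S).Reachable v t} := by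
  classical
  by_contra hcon
  push_neg at hcon
  have hnn : ∀ s ∈ S, 0 ≤ a s := fun s hs => (hpos s hs).le
  -- total weight is 1
  have htot : ∑ s ∈ S, a s = 1 := by
    have h := Finset.sum_fiberwise_of_maps_to (s := S) (t := (Finset.univ : Finset (Fin 4)))
      (g := fun s : Fin 3 → Fin 4 => s 0) (fun x _ => Finset.mem_univ _) a
    rw [← h]
    have : ∀ j : Fin 4, ∑ s ∈ S.filter (fun s => s 0 = j), a s = 1/4 := fun j => hplane 0 j
    simp only [this]
    norm_num
  -- for each s ∈ S, the weight of elements disjoint from s is ≥ 1/4 + 2 a s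
  have key : ∀ s ∈ S, (1/4 : ℝ) + 2 * a s ≤ ∑ t ∈ S.filter (fun t => ∀ i, s i ≠ t i), a t := by
    intro s hs
    have hsplit := Finset.sum_filter_add_sum_filter_not S (fun t => ∀ i, s i ≠ t i) a
    have hsmem : s ∈ S.filter (fun t => ¬ ∀ i, s i ≠ t i) := by
      refine Finset.mem_filter.mpr ⟨hs, ?_⟩
      push_neg
      exact ⟨0, rfl⟩
    have hstep : ∀ t ∈ S.filter (fun t => ¬ ∀ i, s i ≠ t i),
        a t + (if t = s then 2 * a t else 0) ≤ ∑ i : Fin 3, (if s i = t i then a t else 0) := by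
      intro t ht
      rw [Finset.mem_filter] at ht
      obtain ⟨htS, hnt⟩ := ht
      push_neg at hnt
      obtain ⟨i0, hi0⟩ := hnt
      have hat : 0 ≤ a t := hnn t htS
      by_cases hts : t = s
      · subst hts
        simp [Fin.sum_univ_three]
        linarith
      · rw [if_neg hts]
        have h2 : (if s i0 = t i0 then a t else 0) ≤ ∑ i : Fin 3, (if s i = t i then a t else 0) :=
          Finset.single_le_sum (f := fun i => if s i = t i then a t else 0)
            (fun i _ => by split <;> simp [hat]) (Finset.mem_univ i0)
        rw [if_pos hi0] at h2
        linarith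
    have hub : ∑ t ∈ S.filter (fun t => ¬ ∀ i, s i ≠ t i), a t + 2 * a s ≤ 3/4 := by
      have e1 : ∑ t ∈ S.filter (fun t => ¬ ∀ i, s i ≠ t i), (a t + (if t = s then 2 * a t else 0))
          = ∑ t ∈ S.filter (fun t => ¬ ∀ i, s i ≠ t i), a t + 2 * a s := by
        rw [Finset.sum_add_distrib, Finset.sum_ite_eq' _ s (fun t => 2 * a t), if_pos hsmem]
      have e2 : ∑ t ∈ S.filter (fun t => ¬ ∀ i, s i ≠ t i), (a t + (if t = s then 2 * a t else 0))
          ≤ ∑ t ∈ S.filter (fun t => ¬ ∀ i, s i ≠ t i), ∑ i : Fin 3, (if s i = t i then a t else 0) :=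
        Finset.sum_le_sum hstep
      have e3 : ∑ t ∈ S.filter (fun t => ¬ ∀ i, s i ≠ t i), ∑ i : Fin 3, (if s i = t i then a t else 0)
          ≤ ∑ t ∈ S, ∑ i : Fin 3, (if s i = t i then a t else 0) := by
        refine Finset.sum_le_sum_of_subset_of_nonneg (Finset.filter_subset _ _) ?_
        intro t htS _
        refine Finset.sum_nonneg fun i _ => ?_
        split <;> simp [hnn t htS]
      have e4 : ∑ t ∈ S, ∑ i : Fin 3, (if s i = t i then a t else 0) = 3/4 := by
        rw [Finset.sum_comm]
        have : ∀ i : Fin 3, ∑ t ∈ S, (if s i = t i then a t else 0) = 1/4 := by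
          intro i
          have := hplane i (s i)
          rw [Finset.sum_filter] at this
          rw [← this]
          apply Finset.sum_congr rfl
          intro t _
          simp [eq_comm]
        simp only [this]
        norm_num
      linarith
    linarith
  -- component weight lower bound
  have comp_lb : ∀ s ∈ S, (1/4 : ℝ) + 3 * a s
      ≤ ∑ t ∈ S.filter (fun t => (conflictGraph S).Reachable s t), a t := by
    intro s hs
    have hsub : insert s (S.filter (fun t => ∀ i, s i ≠ t i))
        ⊆ S.filter (fun t => (conflictGraph S).Reachable s t) := by
      intro t ht
      rw [Finset.mem_insert] at ht
      rcases ht with rfl | ht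
      · exact Finset.mem_filter.mpr ⟨hs, SimpleGraph.Reachable.refl _⟩
      · rw [Finset.mem_filter] at ht
        exact Finset.mem_filter.mpr ⟨ht.1, SimpleGraph.Adj.reachable ⟨hs, ht.1, ht.2⟩⟩
    have hnotmem : s ∉ S.filter (fun t => ∀ i, s i ≠ t i) := by
      simp only [Finset.mem_filter, not_and]
      intro _ h
      exact h 0 rfl
    have h1 : a s + ∑ t ∈ S.filter (fun t => ∀ i, s i ≠ t i), a t
        ≤ ∑ t ∈ S.filter (fun t => (conflictGraph S).Reachable s t), a t := by
      rw [← Finset.sum_insert hnotmem]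
      exact Finset.sum_le_sum_of_subset_of_nonneg hsub
        (fun t htS _ => hnn t (Finset.mem_filter.mp htS).1)
    have h2 := key s hs
    linarith
  -- components have at most 5 elements
  have hcomp5 : ∀ v ∈ S, (S.filter (fun t => (conflictGraph S).Reachable v t)).card ≤ 5 := by
    intro v hv
    have h := hcon v hv
    have hset : {t | t ∈ S ∧ (conflictGraph S).Reachable v t}
        = ↑(S.filter (fun t => (conflictGraph S).Reachable v t)) := by
      ext t
      simp [Finset.mem_filter]
    rw [hset, Set.ncard_coe_finset] at h
    omega
  -- every component has weight ≥ 5/8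
  have hw : ∀ v ∈ S, (5/8 : ℝ)
      ≤ ∑ t ∈ S.filter (fun t => (conflictGraph S).Reachable v t), a t := by
    intro v hv
    have hvmem : v ∈ S.filter (fun t => (conflictGraph S).Reachable v t) :=
      Finset.mem_filter.mpr ⟨hv, SimpleGraph.Reachable.refl _⟩
    obtain ⟨s0, hs0mem, hs0max⟩ :=
      Finset.exists_max_image (S.filter (fun t => (conflictGraph S).Reachable v t)) a ⟨v, hvmem⟩
    have hs0S : s0 ∈ S := (Finset.mem_filter.mp hs0mem).1
    have hreach : (conflictGraph S).Reachable v s0 := (Finset.mem_filter.mp hs0mem).2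
    have hEq : S.filter (fun t => (conflictGraph S).Reachable s0 t)
        = S.filter (fun t => (conflictGraph S).Reachable v t) := by
      apply Finset.filter_congr
      intro t _
      exact ⟨fun h => hreach.trans h, fun h => hreach.symm.trans h⟩
    have hlb : (1/4 : ℝ) + 3 * a s0
        ≤ ∑ t ∈ S.filter (fun t => (conflictGraph S).Reachable v t), a t := by
      rw [← hEq]
      exact comp_lb s0 hs0S
    have hub : ∑ t ∈ S.filter (fun t => (conflictGraph S).Reachable v t), a t ≤ 5 * a s0 := by
      calc ∑ t ∈ S.filter (fun t => (conflictGraph S).Reachable v t), a t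
          ≤ (S.filter (fun t => (conflictGraph S).Reachable v t)).card • a s0 :=
            Finset.sum_le_card_nsmul _ _ _ hs0max
        _ = ((S.filter (fun t => (conflictGraph S).Reachable v t)).card : ℝ) * a s0 := by
            rw [nsmul_eq_mul]
        _ ≤ 5 * a s0 := by
            have h5 := hcomp5 v hv
            have := hnn s0 hs0S
            have : ((S.filter (fun t => (conflictGraph S).Reachable v t)).card : ℝ) ≤ 5 := by
              exact_mod_cast h5
            nlinarith [hnn s0 hs0S]
    linarith
  -- two disjoint components of weight ≥ 5/8 each: contradiction
  have hSne : S.Nonempty := by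
    rw [← Finset.card_pos, hS]; norm_num
  obtain ⟨v, hv⟩ := hSne
  have hns : ¬ S ⊆ S.filter (fun t => (conflictGraph S).Reachable v t) := by
    intro h
    have h1 := Finset.card_le_card h
    have h2 := hcomp5 v hv
    omega
  obtain ⟨u, huS, hunot⟩ := Finset.not_subset.mp hns
  have hdisj : Disjoint (S.filter (fun t => (conflictGraph S).Reachable v t))
      (S.filter (fun t => (conflictGraph S).Reachable u t)) := by
    rw [Finset.disjoint_left]
    intro t htv htu
    exact hunot (Finset.mem_filter.mpr ⟨huS,
      (Finset.mem_filter.mp htv).2.trans (Finset.mem_filter.mp htu).2.symm⟩)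
  have hsum : ∑ t ∈ (S.filter (fun t => (conflictGraph S).Reachable v t)
      ∪ S.filter (fun t => (conflictGraph S).Reachable u t)), a t ≤ 1 := by
    rw [← htot]
    exact Finset.sum_le_sum_of_subset_of_nonneg
      (Finset.union_subset (Finset.filter_subset _ _) (Finset.filter_subset _ _))
      (fun t ht _ => hnn t ht)
  rw [Finset.sum_union hdisj] at hsum
  have h1 := hw v hv
  have h2 := hw u huS
  linarith
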